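/- arXiv:2510.22145 — 3 statements merged into one kernel-verified Lean document; each statement's English description precedes it below -/
import Mathlib

section
/- For any integers q ≥ 2 and m ≥ 2, with C_i defined as the set of vectors (f_2,...,f_m) with each f_j ∈ {1,...,q-1} and ∑_{j=2}^m f_j ≡ i (mod q) (representatives in {1,...,q}), the following holds: if m is even then exactly q-1 indices i ∈ {1,...,q} satisfy |C_i| = ((q-1)^(m-1) + 1)/q and exactly one index satisfies |C_i| = ((q-1)^(m-1) - q + 1)/q; if m is odd then exactly q-1 indices satisfy |C_i| = ((q-1)^(m-1) - 1)/q and exactly one satisfies |C_i| = ((q-1)^(m-1) + q - 1)/q. -/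
open Finset

/-- Number of vectors `f : Fin n → Fin (q-1)` whose shifted coordinate sum is `t` in `ZMod q`. -/
def cntP3 (q n : ℕ) (t : ZMod q) : ℕ :=
  (Finset.univ.filter (fun f : Fin n → Fin (q - 1) =>
    (∑ j, (((f j : ℕ) + 1 : ℕ) : ZMod q)) = t)).card

lemma innerP3 (q : ℕ) (hq : 2 ≤ q) (x : ZMod q) :
    (Finset.univ.filter (fun a : Fin (q - 1) => (((a : ℕ) + 1 : ℕ) : ZMod q) = x)).card
      = if x = 0 then 0 else 1 := by
  haveI : NeZero q := ⟨by omega⟩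
  split_ifs with hx
  · subst hx
    rw [Finset.card_eq_zero, Finset.filter_eq_empty_iff]
    intro a _
    rw [ZMod.natCast_eq_zero_iff]
    intro hdvd
    have := Nat.le_of_dvd (by omega) hdvd
    have := a.2
    omega
  · have hv : x.val < q := x.val_lt
    have hv0 : 0 < x.val := by
      rcases Nat.eq_zero_or_pos x.val with h | h
      · exact absurd ((ZMod.val_eq_zero x).mp h) hx
      · exact h
    rw [Finset.card_eq_one]
    refine ⟨⟨x.val - 1, by omega⟩, ?_⟩
    ext a
    simp only [Finset.mem_filter, Finset.mem_univ, true_and, Finset.mem_singleton]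
    constructor
    · intro h
      have h2 : (((a : ℕ) + 1 : ℕ) : ZMod q).val = x.val := by rw [h]
      rw [ZMod.val_cast_of_lt (by have := a.2; omega)] at h2
      exact Fin.ext (by simp only [Fin.val_mk]; omega)
    · intro h
      subst h
      apply ZMod.val_injective
      rw [ZMod.val_cast_of_lt (by simp only [Fin.val_mk]; omega)]
      simp only [Fin.val_mk]; omega

lemma cntP3_zero (q : ℕ) (t : ZMod q) : cntP3 q 0 t = if t = 0 then 1 else 0 := by
  unfold cntP3
  rcases eq_or_ne t 0 with h | h <;> simp [h, eq_comm]

lemma cntP3_succ (q n : ℕ) (hq : 2 ≤ q) (t : ZMod q) :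
    cntP3 q (n + 1) t + cntP3 q n t = (q - 1) ^ n := by
  classical
  have key : cntP3 q (n + 1) t =
      ∑ g : Fin n → Fin (q - 1),
        if (∑ j, (((g j : ℕ) + 1 : ℕ) : ZMod q)) = t then 0 else 1 := by
    unfold cntP3
    rw [Finset.card_filter]
    have hre : (∑ p : Fin (q-1) × (Fin n → Fin (q-1)),
        if (∑ j : Fin (n+1), (((Fin.cons (α := fun _ : Fin (n+1) => Fin (q-1)) p.1 p.2 j) : ℕ) + 1 : ℕ) : ZMod q) = t then (1:ℕ) else 0)
        = ∑ f : Fin (n+1) → Fin (q-1),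
        if (∑ j : Fin (n+1), (((f j : Fin (q-1)) : ℕ) + 1 : ℕ) : ZMod q) = t then (1:ℕ) else 0 :=
      Fintype.sum_equiv (Fin.consEquiv (fun _ : Fin (n+1) => Fin (q - 1))) _ _ (fun p => rfl)
    rw [← hre]
    rw [Fintype.sum_prod_type_right]
    congr 1
    ext g
    have hsum : ∀ a : Fin (q - 1),
        (∑ j : Fin (n+1), (((Fin.cons (α := fun _ : Fin (n+1) => Fin (q-1)) a g j) : ℕ) + 1 : ℕ) : ZMod q)
          = (((a : ℕ) + 1 : ℕ) : ZMod q) + ∑ j : Fin n, (((g j : ℕ) + 1 : ℕ) : ZMod q) := by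
      intro a
      rw [Fin.sum_univ_succ]
      simp [Fin.cons_zero, Fin.cons_succ]
    simp only [hsum]
    rcases eq_or_ne (∑ j : Fin n, (((g j : ℕ) + 1 : ℕ) : ZMod q)) t with h | h
    · rw [if_pos h]
      have : ∀ a : Fin (q-1), ¬ ((((a : ℕ) + 1 : ℕ) : ZMod q) + ∑ j : Fin n, (((g j : ℕ) + 1 : ℕ) : ZMod q) = t) := by
        intro a hc
        have : (((a : ℕ) + 1 : ℕ) : ZMod q) = 0 := by
          rw [h] at hc; simpa using hc
        have h0 := innerP3 q hq 0
        rw [if_pos rfl, Finset.card_eq_zero, Finset.filter_eq_empty_iff] at h0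
        exact h0 (Finset.mem_univ a) this
      exact Finset.sum_eq_zero (fun a _ => if_neg (this a))
    · rw [if_neg h]
      have heq : ∀ a : Fin (q-1),
          ((((a : ℕ) + 1 : ℕ) : ZMod q) + ∑ j : Fin n, (((g j : ℕ) + 1 : ℕ) : ZMod q) = t)
          ↔ ((((a : ℕ) + 1 : ℕ) : ZMod q) = t - ∑ j : Fin n, (((g j : ℕ) + 1 : ℕ) : ZMod q)) := by
        intro a; exact eq_sub_iff_add_eq.symm
      simp only [heq]
      have h1 := innerP3 q hq (t - ∑ j : Fin n, (((g j : ℕ) + 1 : ℕ) : ZMod q))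
      rw [if_neg (sub_ne_zero.mpr (Ne.symm h))] at h1
      rw [Finset.card_filter] at h1
      exact h1
  rw [key]
  unfold cntP3
  rw [Finset.card_filter]
  rw [← Finset.sum_add_distrib]
  have : ∀ g : Fin n → Fin (q-1),
      ((if (∑ j, (((g j : ℕ) + 1 : ℕ) : ZMod q)) = t then 0 else 1)
        + if (∑ j, (((g j : ℕ) + 1 : ℕ) : ZMod q)) = t then 1 else 0) = 1 := by
    intro g; split_ifs <;> rfl
  simp only [this]
  simp [Finset.card_univ]

lemma cntP3_formula (q : ℕ) (hq : 2 ≤ q) (n : ℕ) (t : ZMod q) :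
    (q : ℤ) * cntP3 q n t
      = ((q : ℤ) - 1) ^ n - (-1) ^ n + (if t = 0 then (q:ℤ) * (-1) ^ n else 0) := by
  induction n with
  | zero => rw [cntP3_zero]; split_ifs <;> simp
  | succ n ih =>
    have h := cntP3_succ q n hq t
    have hc : ((q - 1 : ℕ) : ℤ) = (q : ℤ) - 1 := by omega
    have h' : (cntP3 q (n+1) t : ℤ) = ((q : ℤ) - 1) ^ n - cntP3 q n t := by
      have h2 : ((cntP3 q (n+1) t : ℤ)) + cntP3 q n t = ((q-1:ℕ) : ℤ)^n := by
        exact_mod_cast congrArg (Nat.cast : ℕ → ℤ) h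
      rw [hc] at h2; linarith
    rw [mul_comm (q:ℤ)] at ih ⊢
    rw [h', pow_succ, pow_succ]
    split_ifs with ht
    · rw [if_pos ht] at ih; linear_combination -ih
    · rw [if_neg ht] at ih; linear_combination -ih

lemma cntP3_odd (q : ℕ) (hq : 2 ≤ q) (n : ℕ) (hn : Odd n) (t : ZMod q) :
    cntP3 q n t = if t = 0 then ((q-1)^n + 1 - q) / q else ((q-1)^n + 1) / q := by
  have hf := cntP3_formula q hq n t
  rw [hn.neg_one_pow] at hf
  have hc : ((q - 1 : ℕ) : ℤ) = (q : ℤ) - 1 := by omega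
  have hcast : (((q-1:ℕ))^n : ℤ) = ((q:ℤ)-1)^n := by rw [hc]
  split_ifs with ht
  · rw [if_pos ht] at hf
    have hn1 : q * cntP3 q n t + q = (q-1)^n + 1 := by
      have : (q : ℤ) * cntP3 q n t + q = ((q-1:ℕ):ℤ)^n + 1 := by rw [hcast]; linear_combination hf
      exact_mod_cast this
    have : (q-1)^n + 1 - q = q * cntP3 q n t := by omega
    rw [this, Nat.mul_div_cancel_left _ (by omega : 0 < q)]
  · rw [if_neg ht] at hf
    have hn1 : q * cntP3 q n t = (q-1)^n + 1 := by
      have : (q : ℤ) * cntP3 q n t = ((q-1:ℕ):ℤ)^n + 1 := by rw [hcast]; linear_combination hf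
      exact_mod_cast this
    rw [← hn1, Nat.mul_div_cancel_left _ (by omega : 0 < q)]

lemma cntP3_even (q : ℕ) (hq : 2 ≤ q) (n : ℕ) (hn : Even n) (t : ZMod q) :
    cntP3 q n t = if t = 0 then ((q-1)^n + q - 1) / q else ((q-1)^n - 1) / q := by
  have hf := cntP3_formula q hq n t
  rw [hn.neg_one_pow] at hf
  have hc : ((q - 1 : ℕ) : ℤ) = (q : ℤ) - 1 := by omega
  have hcast : (((q-1:ℕ))^n : ℤ) = ((q:ℤ)-1)^n := by rw [hc]
  have hpow1 : 1 ≤ (q-1)^n := Nat.one_le_pow _ _ (by omega)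
  split_ifs with ht
  · rw [if_pos ht] at hf
    have hn1 : q * cntP3 q n t + 1 = (q-1)^n + q := by
      have : (q : ℤ) * cntP3 q n t + 1 = ((q-1:ℕ):ℤ)^n + q := by rw [hcast]; linear_combination hf
      exact_mod_cast this
    have : (q-1)^n + q - 1 = q * cntP3 q n t := by omega
    rw [this, Nat.mul_div_cancel_left _ (by omega : 0 < q)]
  · rw [if_neg ht] at hf
    have hn1 : q * cntP3 q n t + 1 = (q-1)^n := by
      have : (q : ℤ) * cntP3 q n t + 1 = ((q-1:ℕ):ℤ)^n := by rw [hcast]; linear_combination hf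
      exact_mod_cast this
    have : (q-1)^n - 1 = q * cntP3 q n t := by omega
    rw [this, Nat.mul_div_cancel_left _ (by omega : 0 < q)]

open Finset in
/-- Proposition 3: counting vectors `(f_2,…,f_m) ∈ {1,…,q-1}^{m-1}` by the residue
class `i ∈ {1,…,q}` of their coordinate sum modulo `q`.  Each vector is encoded as
`f : Fin (m-1) → Fin (q-1)` with coordinate values `(f j) + 1 ∈ {1,…,q-1}`. -/
theorem stmt_4 (q m : ℕ) (hq : 2 ≤ q) (hm : 2 ≤ m) :
    let C : ℕ → Finset (Fin (m - 1) → Fin (q - 1)) := fun i =>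
      Finset.univ.filter (fun f => (∑ j, ((f j : ℕ) + 1)) % q = i % q)
    if Even m then
      ((Finset.Icc 1 q).filter
          (fun i => (C i).card = ((q - 1) ^ (m - 1) + 1) / q)).card = q - 1 ∧
      ((Finset.Icc 1 q).filter
          (fun i => (C i).card = ((q - 1) ^ (m - 1) + 1 - q) / q)).card = 1
    else
      ((Finset.Icc 1 q).filter
          (fun i => (C i).card = ((q - 1) ^ (m - 1) - 1) / q)).card = q - 1 ∧
      ((Finset.Icc 1 q).filter
          (fun i => (C i).card = ((q - 1) ^ (m - 1) + q - 1) / q)).card = 1 := by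
  intro C
  haveI : NeZero q := ⟨by omega⟩
  have hC : ∀ i : ℕ, (C i).card = cntP3 q (m - 1) ((i : ℕ) : ZMod q) := by
    intro i
    show (Finset.univ.filter (fun f : Fin (m-1) → Fin (q-1) =>
      (∑ j, ((f j : ℕ) + 1)) % q = i % q)).card = _
    unfold cntP3
    congr 1
    apply Finset.filter_congr
    intro f _
    rw [← ZMod.natCast_eq_natCast_iff', Nat.cast_sum]
  have hne0 : ∀ i : ℕ, 1 ≤ i → i ≤ q - 1 → ((i : ℕ) : ZMod q) ≠ 0 := by
    intro i h1 h2 hd0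
    rw [ZMod.natCast_eq_zero_iff] at hd0
    have := Nat.le_of_dvd (by omega) hd0
    omega
  have hcZ : ((q - 1 : ℕ) : ℤ) = (q : ℤ) - 1 := by omega
  have hq0 : ((q : ℕ) : ZMod q) = 0 := ZMod.natCast_self q
  rcases Nat.even_or_odd m with he | ho
  · rw [if_pos he]
    have hodd : Odd (m - 1) := Nat.Even.sub_odd (by omega) he odd_one
    have hval := cntP3_odd q hq (m - 1) hodd
    -- A = B + 1
    have hA : q * (((q-1)^(m-1) + 1) / q) = (q-1)^(m-1) + 1 := by
      have hcnt := cntP3_odd q hq (m-1) hodd ((1:ℕ) : ZMod q)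
      rw [if_neg (hne0 1 le_rfl (by omega))] at hcnt
      rw [← hcnt]
      have hf := cntP3_formula q hq (m-1) ((1:ℕ) : ZMod q)
      rw [if_neg (hne0 1 le_rfl (by omega)), hodd.neg_one_pow] at hf
      have : (q : ℤ) * cntP3 q (m-1) ((1:ℕ):ZMod q) = ((q-1:ℕ):ℤ)^(m-1) + 1 := by
        rw [hcZ]; linear_combination hf
      exact_mod_cast this
    have hB : q * (((q-1)^(m-1) + 1 - q) / q) + q = (q-1)^(m-1) + 1 := by
      have hcnt := cntP3_odd q hq (m-1) hodd 0
      rw [if_pos rfl] at hcnt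
      rw [← hcnt]
      have hf := cntP3_formula q hq (m-1) 0
      rw [if_pos rfl, hodd.neg_one_pow] at hf
      have : (q : ℤ) * cntP3 q (m-1) 0 + q = ((q-1:ℕ):ℤ)^(m-1) + 1 := by
        rw [hcZ]; linear_combination hf
      exact_mod_cast this
    have hAB : ((q-1)^(m-1) + 1) / q = ((q-1)^(m-1) + 1 - q) / q + 1 := by
      apply Nat.eq_of_mul_eq_mul_left (show 0 < q by omega)
      rw [Nat.mul_add, Nat.mul_one]
      omega
    constructor
    · have e1 : (Finset.Icc 1 q).filter
          (fun i => (C i).card = ((q - 1) ^ (m - 1) + 1) / q) = Finset.Icc 1 (q-1) := by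
        ext i
        simp only [Finset.mem_filter, Finset.mem_Icc]
        constructor
        · rintro ⟨⟨h1, h2⟩, hc⟩
          refine ⟨h1, ?_⟩
          by_contra hcon
          have hiq : i = q := by omega
          rw [hC i, hiq, hq0, hval, if_pos rfl] at hc
          omega
        · rintro ⟨h1, h2⟩
          exact ⟨⟨h1, by omega⟩, by rw [hC i, hval, if_neg (hne0 i h1 h2)]⟩
      rw [e1, Nat.card_Icc]
      omega
    · have e2 : (Finset.Icc 1 q).filter
          (fun i => (C i).card = ((q - 1) ^ (m - 1) + 1 - q) / q) = {q} := by
        ext i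
        simp only [Finset.mem_filter, Finset.mem_Icc, Finset.mem_singleton]
        constructor
        · rintro ⟨⟨h1, h2⟩, hc⟩
          by_contra hcon
          rw [hC i, hval, if_neg (hne0 i h1 (by omega))] at hc
          omega
        · intro hiq
          exact ⟨⟨by omega, by omega⟩, by rw [hiq, hC q, hq0, hval, if_pos rfl]⟩
      rw [e2, Finset.card_singleton]
  · rw [if_neg (by simpa using ho)]
    have heven : Even (m - 1) := Nat.Odd.sub_odd ho odd_one
    have hval := cntP3_even q hq (m - 1) heven
    have hpow1 : 1 ≤ (q-1)^(m-1) := Nat.one_le_pow _ _ (by omega)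
    have hA : q * (((q-1)^(m-1) - 1) / q) + 1 = (q-1)^(m-1) := by
      have hcnt := cntP3_even q hq (m-1) heven ((1:ℕ) : ZMod q)
      rw [if_neg (hne0 1 le_rfl (by omega))] at hcnt
      rw [← hcnt]
      have hf := cntP3_formula q hq (m-1) ((1:ℕ) : ZMod q)
      rw [if_neg (hne0 1 le_rfl (by omega)), heven.neg_one_pow] at hf
      have : (q : ℤ) * cntP3 q (m-1) ((1:ℕ):ZMod q) + 1 = ((q-1:ℕ):ℤ)^(m-1) := by
        rw [hcZ]; linear_combination hf
      exact_mod_cast this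
    have hB : q * (((q-1)^(m-1) + q - 1) / q) + 1 = (q-1)^(m-1) + q := by
      have hcnt := cntP3_even q hq (m-1) heven 0
      rw [if_pos rfl] at hcnt
      rw [← hcnt]
      have hf := cntP3_formula q hq (m-1) 0
      rw [if_pos rfl, heven.neg_one_pow] at hf
      have : (q : ℤ) * cntP3 q (m-1) 0 + 1 = ((q-1:ℕ):ℤ)^(m-1) + q := by
        rw [hcZ]; linear_combination hf
      exact_mod_cast this
    have hAB : ((q-1)^(m-1) + q - 1) / q = ((q-1)^(m-1) - 1) / q + 1 := by
      apply Nat.eq_of_mul_eq_mul_left (show 0 < q by omega)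
      rw [Nat.mul_add, Nat.mul_one]
      omega
    constructor
    · have e1 : (Finset.Icc 1 q).filter
          (fun i => (C i).card = ((q - 1) ^ (m - 1) - 1) / q) = Finset.Icc 1 (q-1) := by
        ext i
        simp only [Finset.mem_filter, Finset.mem_Icc]
        constructor
        · rintro ⟨⟨h1, h2⟩, hc⟩
          refine ⟨h1, ?_⟩
          by_contra hcon
          have hiq : i = q := by omega
          rw [hC i, hiq, hq0, hval, if_pos rfl] at hc
          omega
        · rintro ⟨h1, h2⟩
          exact ⟨⟨h1, by omega⟩, by rw [hC i, hval, if_neg (hne0 i h1 h2)]⟩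
      rw [e1, Nat.card_Icc]
      omega
    · have e2 : (Finset.Icc 1 q).filter
          (fun i => (C i).card = ((q - 1) ^ (m - 1) + q - 1) / q) = {q} := by
        ext i
        simp only [Finset.mem_filter, Finset.mem_Icc, Finset.mem_singleton]
        constructor
        · rintro ⟨⟨h1, h2⟩, hc⟩
          by_contra hcon
          rw [hC i, hval, if_neg (hne0 i h1 (by omega))] at hc
          omega
        · intro hiq
          exact ⟨⟨by omega, by omega⟩, by rw [hiq, hC q, hq0, hval, if_pos rfl]⟩
      rw [e2, Finset.card_singleton]
end

section
/- Let P be a (K,F,Z,S) PDA and for each column k define A_k = { j ∈ [F] : P(j,k) ≠ * }. Then for any permutation (i_1,...,i_K) of {1,...,K}, the number S of distinct integers in P satisfies S ≥ ∑_{h=1}^{K} |A_{i_1} ∩ A_{i_2} ∩ ... ∩ A_{i_h}|. -/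
/-- A `(K,F,Z,S)` placement delivery array. -/
structure PDA (K F Z S : ℕ) where
  P : Fin F → Fin K → Option (Fin S)
  col_stars : ∀ k : Fin K,
    (Finset.univ.filter (fun j : Fin F => P j k = none)).card = Z
  each_int_occurs : ∀ s : Fin S, ∃ j k, P j k = some s
  C3 : ∀ (j₁ j₂ : Fin F) (k₁ k₂ : Fin K) (s : Fin S),
    (j₁, k₁) ≠ (j₂, k₂) → P j₁ k₁ = some s → P j₂ k₂ = some s →
      j₁ ≠ j₂ ∧ k₁ ≠ k₂ ∧ P j₁ k₂ = none ∧ P j₂ k₁ = none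

/-- Theorem 1 of the paper: with `A_k = {j : P(j,k) ≠ *}` the non-star index set
of column `k`, for any permutation `σ` of the columns,
`S ≥ ∑_{h=1}^{K} |A_{σ(1)} ∩ ⋯ ∩ A_{σ(h)}|`. -/
theorem stmt_10 (K F Z S : ℕ) (A : PDA K F Z S) (σ : Equiv.Perm (Fin K)) :
    let Ak : Fin K → Finset (Fin F) := fun k =>
      Finset.univ.filter (fun j => A.P j k ≠ none)
    ∑ h ∈ Finset.range K,
        (Finset.univ.filter
          (fun x : Fin F => ∀ j : Fin K, (j : ℕ) ≤ h → x ∈ Ak (σ j))).card ≤ S := by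
  intro Ak
  set B : ℕ → Finset (Fin F) := fun h =>
    Finset.univ.filter (fun x : Fin F => ∀ j : Fin K, (j : ℕ) ≤ h → x ∈ Ak (σ j))
    with hB
  change ∑ h ∈ Finset.range K, (B h).card ≤ S
  rw [← Finset.card_sigma]
  -- the target finset of `some` values
  have htarget : (Finset.univ.image (some : Fin S → Option (Fin S))).card = S := by
    rw [Finset.card_image_of_injective _ (Option.some_injective _), Finset.card_univ,
      Fintype.card_fin]
  rw [← htarget]
  set f : (Σ _ : ℕ, Fin F) → Option (Fin S) := fun p =>
    if h : p.1 < K then A.P p.2 (σ ⟨p.1, h⟩) else none with hf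
  -- membership facts
  have hmem : ∀ p ∈ (Finset.range K).sigma B, p.1 < K ∧
      ∀ j : Fin K, (j : ℕ) ≤ p.1 → A.P p.2 (σ j) ≠ none := by
    intro p hp
    rw [Finset.mem_sigma, Finset.mem_range] at hp
    refine ⟨hp.1, fun j hj => ?_⟩
    have := hp.2
    rw [hB, Finset.mem_filter] at this
    have := this.2 j hj
    simpa [Ak, Finset.mem_filter] using this
  apply Finset.card_le_card_of_injOn f
  · intro p hp
    obtain ⟨h1, h2⟩ := hmem p hp
    have := h2 ⟨p.1, h1⟩ (le_refl _)
    rw [hf]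
    simp only [h1, dif_pos]
    rcases hx : A.P p.2 (σ ⟨p.1, h1⟩) with _ | s
    · exact absurd hx this
    · simp
  · intro p hp q hq hfpq
    obtain ⟨hp1, hp2⟩ := hmem p hp
    obtain ⟨hq1, hq2⟩ := hmem q hq
    have key : ∀ (p q : Σ _ : ℕ, Fin F), p.1 < K → q.1 < K →
        (∀ j : Fin K, (j : ℕ) ≤ q.1 → A.P q.2 (σ j) ≠ none) →
        p.1 ≤ q.1 → f p = f q → p = q := by
      intro p q hp1 hq1 hq2 hle hfeq
      rw [hf] at hfeq
      simp only [hp1, hq1, dif_pos] at hfeq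
      rcases hs : A.P p.2 (σ ⟨p.1, hp1⟩) with _ | s
      · have : A.P q.2 (σ ⟨q.1, hq1⟩) = none := by rw [← hfeq, hs]
        exact absurd this (hq2 ⟨q.1, hq1⟩ (le_refl _))
      have hs' : A.P q.2 (σ ⟨q.1, hq1⟩) = some s := by rw [← hfeq, hs]
      by_cases hcell : (p.2, σ ⟨p.1, hp1⟩) = (q.2, σ ⟨q.1, hq1⟩)
      · obtain ⟨h₁, h₂⟩ := Prod.mk.injEq .. ▸ hcell
        have : p.1 = q.1 := by
          have := σ.injective h₂
          exact Fin.mk.inj_iff.mp this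
        exact Sigma.ext this (by simp [h₁])
      · obtain ⟨-, -, -, hnone⟩ := A.C3 p.2 q.2 (σ ⟨p.1, hp1⟩) (σ ⟨q.1, hq1⟩) s hcell hs hs'
        exact absurd hnone (hq2 ⟨p.1, hp1⟩ hle)
    rcases le_total p.1 q.1 with h | h
    · exact key p q hp1 hq1 hq2 h hfpq
    · exact (key q p hq1 hp1 hp2 h hfpq.symm).symm
end

section
/- Let P be a (K,F,Z,S) PDA with column non-star sets A_k. For any permutation (i_1,...,i_K) of [K], any h < h' in [K], any x1 ∈ A_{i_1} ∩ ... ∩ A_{i_h} and x2 ∈ A_{i_1} ∩ ... ∩ A_{i_{h'}} with x1 ≠ x2, the integer entries P(x1, i_h) and P(x2, i_{h'}) are distinct. -/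
/-- The key distinctness claim in the proof of Theorem 1: for `h < h'`,
`x₁ ∈ ⋂_{j ≤ h} A_{σ(j)}`, `x₂ ∈ ⋂_{j ≤ h'} A_{σ(j)}` with `x₁ ≠ x₂`, the
(integer) entries `P(x₁, σ(h))` and `P(x₂, σ(h'))` are distinct. -/
theorem stmt_11 (K F Z S : ℕ) (A : PDA K F Z S) (σ : Equiv.Perm (Fin K))
    (h h' : Fin K) (hhh' : h < h') (x₁ x₂ : Fin F) (hx : x₁ ≠ x₂)
    (hx₁ : ∀ j : Fin K, j ≤ h → A.P x₁ (σ j) ≠ none)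
    (hx₂ : ∀ j : Fin K, j ≤ h' → A.P x₂ (σ j) ≠ none) :
    A.P x₁ (σ h) ≠ A.P x₂ (σ h') := by
  intro heq
  obtain ⟨s, hs⟩ : ∃ s, A.P x₁ (σ h) = some s := by
    cases hP : A.P x₁ (σ h) with
    | none => exact absurd hP (hx₁ h le_rfl)
    | some s => exact ⟨s, rfl⟩
  have hs' : A.P x₂ (σ h') = some s := heq ▸ hs
  have hne : (x₁, σ h) ≠ (x₂, σ h') := fun hp => hx (congrArg Prod.fst hp)
  obtain ⟨_, _, _, h4⟩ := A.C3 x₁ x₂ (σ h) (σ h') s hne hs hs'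
  exact hx₂ h hhh'.le h4
end
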